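/- Let X and Y be finite simple graphs. There is a quantum homomorphism from X to Y if and only if there is a quantum homomorphism from the complete graph K_{|V(X)|} to the complement of the homomorphic product X ⋉ Y; moreover, for every m > |V(X)| there is no quantum homomorphism from K_m to the complement of X ⋉ Y. That is, X →q Y if and only if α_q(X ⋉ Y) = |V(X)|. -/

import Mathlib

open Matrix Finset

/-- A quantum homomorphism from `X` to `Y`: for some `d ≥ 1` there are complex `d × d`
projectors `E x y` (Hermitian idempotents) with `∑ y, E x y = 1` for every `x`,
`E x y * E x y' = 0` whenever `y ≠ y'`, and `E x y * E x' y' = 0` whenever `x, x'`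
are adjacent in `X` and `y, y'` are equal or nonadjacent in `Y`. -/
def IsQuantumHom {V W : Type} [Fintype V] [Fintype W]
    (X : SimpleGraph V) (Y : SimpleGraph W) : Prop :=
  ∃ d : ℕ, 0 < d ∧ ∃ E : V → W → Matrix (Fin d) (Fin d) ℂ,
    (∀ x y, (E x y).IsHermitian ∧ E x y * E x y = E x y) ∧
    (∀ x, ∑ y, E x y = 1) ∧
    (∀ x y y', y ≠ y' → E x y * E x y' = 0) ∧
    (∀ x x' y y', X.Adj x x' → ¬ Y.Adj y y' → E x y * E x' y' = 0)

/-- The homomorphic product `X ⋉ Y`: distinct vertices `(x,y)` and `(x',y')` are adjacent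
iff `x = x'`, or (`x ~ x'` in `X` and `y, y'` are equal or nonadjacent in `Y`). -/
def homProd {V W : Type} (X : SimpleGraph V) (Y : SimpleGraph W) :
    SimpleGraph (V × W) where
  Adj a b := a ≠ b ∧ (a.1 = b.1 ∨ (X.Adj a.1 b.1 ∧ ¬ Y.Adj a.2 b.2))
  symm := ⟨by
    rintro a b ⟨hne, h⟩
    refine ⟨hne.symm, ?_⟩
    rcases h with h | ⟨h1, h2⟩
    · exact Or.inl h.symm
    · exact Or.inr ⟨h1.symm, fun hb => h2 hb.symm⟩⟩
  loopless := ⟨fun a ha => ha.1 rfl⟩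

/-- The independence number: the largest size of a set of pairwise nonadjacent vertices. -/
noncomputable def indepNum {U : Type} [Fintype U] (Z : SimpleGraph U) : ℕ :=
  sSup {n | ∃ s : Finset U, s.card = n ∧ ∀ a ∈ s, ∀ b ∈ s, a ≠ b → ¬ Z.Adj a b}


/-- `X →q Y` iff `K_{|V(X)|} →q` the complement of `X ⋉ Y`; moreover no
`K_m` with `m > |V(X)|` has a quantum homomorphism to that complement.  In other words,
`X →q Y` iff `α_q(X ⋉ Y) = |V(X)|`. -/

lemma not_compl_adj {V W : Type} (X : SimpleGraph V) (Y : SimpleGraph W)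
    (z z' : V × W) (h : z = z' ∨ (homProd X Y).Adj z z') :
    ¬ ((homProd X Y)ᶜ).Adj z z' := by
  rw [SimpleGraph.compl_adj]
  rcases h with h | h
  · exact fun hc => hc.1 h
  · exact fun hc => hc.2 h

lemma forward_dir {V W : Type} [Fintype V] [Fintype W]
    (X : SimpleGraph V) (Y : SimpleGraph W) (h : IsQuantumHom X Y) :
    IsQuantumHom (⊤ : SimpleGraph (Fin (Fintype.card V))) (homProd X Y)ᶜ := by
  classical
  obtain ⟨d, hd, E, hprop, hsum, horth1, horth2⟩ := h
  set e : Fin (Fintype.card V) ≃ V := (Fintype.equivFin V).symm with he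
  refine ⟨d, hd, fun i z => if z.1 = e i then E z.1 z.2 else 0, ?_, ?_, ?_, ?_⟩
  · intro i z
    dsimp only
    split_ifs with hif
    · exact hprop z.1 z.2
    · exact ⟨Matrix.isHermitian_zero, by simp⟩
  · intro i
    rw [Fintype.sum_prod_type]
    rw [Finset.sum_eq_single (e i) (fun x _ hx => by simp [hx]) (by simp)]
    simpa using hsum (e i)
  · rintro i ⟨x, y⟩ ⟨x', y'⟩ hne
    dsimp only
    split_ifs with h1 h2 h2
    · subst h1; subst h2
      exact horth1 _ y y' (fun hy => hne (by rw [hy]))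
    all_goals simp
  · rintro i j ⟨x, y⟩ ⟨x', y'⟩ hadj hnadj
    dsimp only
    split_ifs with h1 h2 h2
    · subst h1; subst h2
      have hij : i ≠ j := by simpa using hadj
      have hxx : e i ≠ e j := fun hc => hij (e.injective hc)
      rw [SimpleGraph.compl_adj] at hnadj
      push_neg at hnadj
      have hzz : ((e i : V), y) ≠ ((e j : V), y') := fun hc => hxx (congrArg Prod.fst hc)
      have hA := hnadj hzz
      obtain ⟨-, hc⟩ := hA
      rcases hc with hc | ⟨hX, hYn⟩
      · exact absurd hc hxx
      · exact horth2 _ _ _ _ hX hYn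
    all_goals simp

lemma trace_eq_sum_normSq {d : ℕ} {P : Matrix (Fin d) (Fin d) ℂ}
    (hH : P.IsHermitian) (hI : P * P = P) :
    P.trace = ((∑ i, ∑ j, ‖P j i‖^2 : ℝ) : ℂ) := by
  conv_lhs => rw [← hI]
  nth_rewrite 1 [← hH]
  unfold Matrix.IsHermitian at hH
  show ∑ i, (Pᴴ * P) i i = _
  push_cast
  congr 1; ext i
  rw [Matrix.mul_apply]
  congr 1; ext j
  rw [Matrix.conjTranspose_apply]
  exact_mod_cast Complex.conj_mul' (P j i)

lemma eq_zero_of_trace_eq_zero {d : ℕ} {P : Matrix (Fin d) (Fin d) ℂ}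
    (hH : P.IsHermitian) (hI : P * P = P) (h : P.trace = 0) : P = 0 := by
  rw [trace_eq_sum_normSq hH hI] at h
  have h' : (∑ i, ∑ j, ‖P j i‖^2 : ℝ) = 0 := by exact_mod_cast h
  ext j i
  have := (Finset.sum_eq_zero_iff_of_nonneg (fun i _ => Finset.sum_nonneg
    (fun j _ => sq_nonneg ‖P j i‖))).mp h' i (mem_univ i)
  have := (Finset.sum_eq_zero_iff_of_nonneg (fun j _ => sq_nonneg ‖P j i‖)).mp this j (mem_univ j)
  simpa using this

lemma sum_orth_idem {ι : Type*} [Fintype ι] {d : ℕ} (P : ι → Matrix (Fin d) (Fin d) ℂ)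
    (hI : ∀ i, P i * P i = P i) (hO : ∀ i j, i ≠ j → P i * P j = 0) :
    (∑ i, P i) * (∑ i, P i) = ∑ i, P i := by
  rw [Finset.sum_mul]
  refine Finset.sum_congr rfl (fun i _ => ?_)
  rw [Finset.mul_sum]
  rw [Finset.sum_eq_single i (fun j _ hji => hO i j (Ne.symm hji)) (by simp)]
  exact hI i

lemma herm_sum {ι : Type*} [Fintype ι] {d : ℕ} (P : ι → Matrix (Fin d) (Fin d) ℂ)
    (h : ∀ i, (P i).IsHermitian) : (∑ i, P i).IsHermitian := by
  unfold Matrix.IsHermitian at *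
  rw [Matrix.conjTranspose_sum]
  exact Finset.sum_congr rfl (fun i _ => h i)

lemma one_sub_proj {d : ℕ} {P : Matrix (Fin d) (Fin d) ℂ}
    (hH : P.IsHermitian) (hI : P * P = P) :
    ((1 : Matrix (Fin d) (Fin d) ℂ) - P).IsHermitian ∧
      ((1 : Matrix (Fin d) (Fin d) ℂ) - P) * (1 - P) = 1 - P := by
  constructor
  · unfold Matrix.IsHermitian at *
    rw [Matrix.conjTranspose_sub, Matrix.conjTranspose_one, hH]
  · rw [sub_mul, one_mul, mul_sub, mul_one, hI]
    abel

lemma backward_dir {V W : Type} [Fintype V] [Fintype W]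
    (X : SimpleGraph V) (Y : SimpleGraph W) {m : ℕ}
    (h : IsQuantumHom (⊤ : SimpleGraph (Fin m)) (homProd X Y)ᶜ) :
    m ≤ Fintype.card V ∧ (m = Fintype.card V → IsQuantumHom X Y) := by
  classical
  obtain ⟨d, hd, F, hprop, hsum, horth1, horth2⟩ := h
  have horth2' : ∀ (i j : Fin m) (z z' : V × W), i ≠ j →
      (z = z' ∨ (homProd X Y).Adj z z') → F i z * F j z' = 0 := by
    intro i j z z' hij hz
    exact horth2 i j z z' (by simpa using hij) (not_compl_adj X Y z z' hz)
  have hx_orth : ∀ (x : V) (p q : Fin m × W), p ≠ q →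
      F p.1 (x, p.2) * F q.1 (x, q.2) = 0 := by
    rintro x ⟨i, y⟩ ⟨j, y'⟩ hne
    by_cases hij : i = j
    · subst hij
      refine horth1 i (x, y) (x, y') (fun hc => hne ?_)
      have h2 : y = y' := congrArg Prod.snd hc
      rw [h2]
    · refine horth2' i j _ _ hij ?_
      by_cases hzz : ((x : V), y) = (x, y')
      · exact Or.inl hzz
      · exact Or.inr ⟨hzz, Or.inl rfl⟩
  set Q : V → Matrix (Fin d) (Fin d) ℂ := fun x => ∑ p : Fin m × W, F p.1 (x, p.2) with hQ
  have hQidem : ∀ x, Q x * Q x = Q x := fun x =>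
    sum_orth_idem _ (fun p => (hprop p.1 (x, p.2)).2) (hx_orth x)
  have hQherm : ∀ x, (Q x).IsHermitian := fun x =>
    herm_sum _ (fun p => (hprop p.1 (x, p.2)).1)
  have hQsum : ∑ x, Q x = (m : ℕ) • (1 : Matrix (Fin d) (Fin d) ℂ) := by
    calc ∑ x, Q x = ∑ x : V, ∑ i : Fin m, ∑ y : W, F i (x, y) :=
          Finset.sum_congr rfl fun x _ => Fintype.sum_prod_type _
      _ = ∑ i : Fin m, ∑ x : V, ∑ y : W, F i (x, y) := Finset.sum_comm
      _ = ∑ i : Fin m, ∑ z : V × W, F i z :=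
          Finset.sum_congr rfl fun i _ => (Fintype.sum_prod_type _).symm
      _ = ∑ _i : Fin m, (1 : Matrix (Fin d) (Fin d) ℂ) :=
          Finset.sum_congr rfl fun i _ => hsum i
      _ = (m : ℕ) • 1 := by simp
  set r : V → ℝ := fun x => ∑ i, ∑ j, ‖Q x j i‖^2 with hr
  have htr : ∀ x, (Q x).trace = ((r x : ℝ) : ℂ) := fun x =>
    trace_eq_sum_normSq (hQherm x) (hQidem x)
  have hr_le : ∀ x, r x ≤ (d : ℝ) := by
    intro x
    obtain ⟨hH1, hI1⟩ := one_sub_proj (hQherm x) (hQidem x)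
    have h1 := trace_eq_sum_normSq hH1 hI1
    have h2 : ((1 : Matrix (Fin d) (Fin d) ℂ) - Q x).trace = (d : ℂ) - (r x : ℂ) := by
      rw [Matrix.trace_sub, Matrix.trace_one, htr x]; simp
    rw [h2] at h1
    have h3 : (d : ℝ) - r x = ∑ i, ∑ j, ‖((1 : Matrix (Fin d) (Fin d) ℂ) - Q x) j i‖^2 := by
      have := h1
      push_cast at this ⊢
      exact_mod_cast this
    have h4 : (0:ℝ) ≤ (d : ℝ) - r x := by
      rw [h3]
      exact Finset.sum_nonneg fun i _ => Finset.sum_nonneg fun j _ => sq_nonneg _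
    linarith
  have hsum_r : ∑ x, r x = (m : ℝ) * d := by
    have h1 : ((∑ x, r x : ℝ) : ℂ) = ((m : ℝ) * d : ℝ) := by
      push_cast
      rw [← Finset.sum_congr rfl (fun x _ => htr x), ← Matrix.trace_sum, hQsum]
      rw [Matrix.trace_smul, Matrix.trace_one]
      simp only [Fintype.card_fin]
      ring
    exact_mod_cast h1
  have hdpos : (0:ℝ) < d := by exact_mod_cast hd
  have hmle : m ≤ Fintype.card V := by
    have h1 : (m : ℝ) * d ≤ (Fintype.card V : ℝ) * d := by
      rw [← hsum_r]
      calc ∑ x, r x ≤ ∑ _x : V, (d:ℝ) := Finset.sum_le_sum fun x _ => hr_le x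
        _ = (Fintype.card V : ℝ) * d := by simp [mul_comm]
    have := le_of_mul_le_mul_right h1 hdpos
    exact_mod_cast this
  refine ⟨hmle, fun hm => ?_⟩
  -- each Q x = 1
  have hrd : ∀ x, r x = (d : ℝ) := by
    have hzero : ∑ x : V, ((d:ℝ) - r x) = 0 := by
      rw [Finset.sum_sub_distrib, hsum_r, hm]
      simp [mul_comm]
    intro x
    have := (Finset.sum_eq_zero_iff_of_nonneg
      (fun x _ => by linarith [hr_le x])).mp hzero x (mem_univ x)
    linarith
  have hQ1 : ∀ x, Q x = 1 := by
    intro x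
    obtain ⟨hH1, hI1⟩ := one_sub_proj (hQherm x) (hQidem x)
    have htr0 : ((1 : Matrix (Fin d) (Fin d) ℂ) - Q x).trace = 0 := by
      rw [Matrix.trace_sub, Matrix.trace_one, htr x, hrd x]
      simp
    have := eq_zero_of_trace_eq_zero hH1 hI1 htr0
    have h2 : (1 : Matrix (Fin d) (Fin d) ℂ) = Q x := by
      rw [← sub_eq_zero]; exact this
    exact h2.symm
  -- build E
  refine ⟨d, hd, fun x y => ∑ i, F i (x, y), ?_, ?_, ?_, ?_⟩
  · intro x y
    constructor
    · exact herm_sum _ (fun i => (hprop i (x, y)).1)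
    · exact sum_orth_idem _ (fun i => (hprop i (x, y)).2)
        (fun i j hij => horth2' i j _ _ hij (Or.inl rfl))
  · intro x
    have hq : ∑ y : W, ∑ i : Fin m, F i (x, y) = (1 : Matrix (Fin d) (Fin d) ℂ) := by
      rw [← hQ1 x]
      show _ = ∑ p : Fin m × W, F p.1 (x, p.2)
      rw [Fintype.sum_prod_type]
      exact Finset.sum_comm
    exact hq
  · intro x y y' hyy
    rw [Finset.sum_mul]
    refine Finset.sum_eq_zero fun i _ => ?_
    rw [Finset.mul_sum]
    refine Finset.sum_eq_zero fun j _ => ?_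
    exact hx_orth x (i, y) (j, y') (fun hc => hyy (congrArg Prod.snd hc))
  · intro x x' y y' hX hY
    rw [Finset.sum_mul]
    refine Finset.sum_eq_zero fun i _ => ?_
    rw [Finset.mul_sum]
    refine Finset.sum_eq_zero fun j _ => ?_
    have hadj : (homProd X Y).Adj (x, y) (x', y') :=
      ⟨fun hc => hX.ne (congrArg Prod.fst hc), Or.inr ⟨hX, hY⟩⟩
    by_cases hij : i = j
    · subst hij
      exact horth1 i (x, y) (x', y') (fun hc => hX.ne (congrArg Prod.fst hc))
    · exact horth2' i j _ _ hij (Or.inr hadj)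

theorem quantumHom_iff_qIndep_homProd {V W : Type} [Fintype V] [Fintype W]
    (X : SimpleGraph V) (Y : SimpleGraph W) :
    (IsQuantumHom X Y ↔
      IsQuantumHom (⊤ : SimpleGraph (Fin (Fintype.card V))) (homProd X Y)ᶜ) ∧
    (∀ m : ℕ, Fintype.card V < m →
      ¬ IsQuantumHom (⊤ : SimpleGraph (Fin m)) (homProd X Y)ᶜ) := by
  constructor
  · constructor
    · exact forward_dir X Y
    · intro h
      exact (backward_dir X Y h).2 rfl
  · intro m hm h
    exact absurd (backward_dir X Y h).1 (not_le.mpr hm)
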